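/- Let r = q/p with p, q coprime positive integers, 5/6 < r < 1, and let N = nq be a multiple of q. Define f(k) = ∏_{j=1}^k (2cos(2πr) - 2cos(2πrj/N)). Then B := N(1-r)/r = n(p-q) is an integer, f(k) = 0 for all k ≥ B, and |∑_{k=0}^{N-1} f(k)| < N. -/

import Mathlib

open Real

lemma prod_lt_one_aux (s : Finset ℕ) (g : ℕ → ℝ) (h : ∀ i ∈ s, 0 ≤ g i ∧ g i < 1)
    (hs : s.Nonempty) : ∏ i ∈ s, g i < 1 := by
  obtain ⟨a, ha⟩ := hs
  calc ∏ i ∈ s, g i = g a * ∏ i ∈ s.erase a, g i := (Finset.mul_prod_erase s g ha).symm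
    _ ≤ g a * 1 := by
        apply mul_le_mul_of_nonneg_left _ (h a ha).1
        exact Finset.prod_le_one (fun i hi => (h i (Finset.mem_of_mem_erase hi)).1)
          (fun i hi => (h i (Finset.mem_of_mem_erase hi)).2.le)
    _ < 1 := by simpa using (h a ha).2

theorem stmt16 (p q : ℕ) (hp : 0 < p) (hq : 0 < q) (hcop : Nat.Coprime p q)
    (r : ℝ) (hr : r = (q : ℝ) / p) (h1 : 5 / 6 < r) (h2 : r < 1)
    (n : ℕ) (hn : 0 < n) (N : ℕ) (hN : N = n * q)
    (f : ℕ → ℝ)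
    (hf : ∀ k, f k = ∏ j ∈ Finset.Icc 1 k, (2 * Real.cos (2 * π * r) - 2 * Real.cos (2 * π * r * j / N))) :
    (N : ℝ) * (1 - r) / r = (n * (p - q) : ℕ) ∧
    (∀ k : ℕ, n * (p - q) ≤ k → f k = 0) ∧
    |∑ k ∈ Finset.range N, f k| < N := by
  have hp' : (0:ℝ) < p := by exact_mod_cast hp
  have hq' : (0:ℝ) < q := by exact_mod_cast hq
  have hn' : (0:ℝ) < n := by exact_mod_cast hn
  have hπ := Real.pi_pos
  have hr0 : 0 < r := by linarith
  have hqp : q < p := by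
    by_contra h
    push_neg at h
    have hpq : (p:ℝ) ≤ q := by exact_mod_cast h
    have : (1:ℝ) ≤ r := by
      rw [hr, le_div_iff₀ hp']; linarith
    linarith
  have hpq2 : p < 2 * q := by
    have h5 : (5:ℝ) * p < q * 6 := by
      have h1' := h1
      rw [hr, div_lt_div_iff₀ (by norm_num) hp'] at h1'
      exact h1'
    have : (p:ℝ) < 2 * q := by linarith
    exact_mod_cast this
  set B := n * (p - q) with hB
  have hB1 : 1 ≤ B := Nat.mul_pos hn (by omega)
  have hBN : B < N := by
    rw [hN, hB]
    exact (Nat.mul_lt_mul_left hn).mpr (by omega)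
  have hBcast : (B:ℝ) = (n:ℝ) * ((p:ℝ) - (q:ℝ)) := by
    rw [hB]
    push_cast [Nat.cast_sub hqp.le]
    ring
  have hNr : (N:ℝ) = (n:ℝ) * q := by rw [hN]; push_cast; ring
  have hN' : (0:ℝ) < N := by rw [hNr]; positivity
  have hrB : r * B / N = 1 - r := by
    rw [hr, hBcast, hNr]
    field_simp
  -- part 1
  have part1 : (N : ℝ) * (1 - r) / r = (B : ℕ) := by
    rw [← hrB]
    field_simp
  have hangB : 2 * π * r * (B:ℝ) / N = 2 * π - 2 * π * r := by
    have h' : 2 * π * r * (B:ℝ) / N = 2 * π * (r * B / N) := by ring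
    rw [h', hrB]; ring
  have hcc : cos (2 * π - 2 * π * r) = cos (2 * π * r) := by
    rw [Real.cos_sub]
    simp
  have gB : 2 * Real.cos (2 * π * r) - 2 * Real.cos (2 * π * r * (B:ℝ) / N) = 0 := by
    rw [hangB, hcc]; ring
  -- part 2
  have part2 : ∀ k : ℕ, B ≤ k → f k = 0 := by
    intro k hk
    rw [hf]
    exact Finset.prod_eq_zero (Finset.mem_Icc.mpr ⟨hB1, hk⟩) gB
  -- factor bound
  have hcc2 : cos (2 * π * r) = cos (2 * π * (1 - r)) := by
    rw [show 2 * π * (1 - r) = 2 * π - 2 * π * r by ring, hcc]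
  have h16 : 2 * π * (1 - r) < π / 3 := by nlinarith
  have h0r : 0 ≤ 2 * π * (1 - r) := by nlinarith
  have hcos1 : 1/2 < cos (2 * π * (1 - r)) := by
    have := Real.cos_lt_cos_of_nonneg_of_le_pi (x := 2 * π * (1 - r)) (y := π / 3)
      h0r (by linarith) h16
    rwa [Real.cos_pi_div_three] at this
  have hfac : ∀ j : ℕ, 1 ≤ j → j < B →
      0 ≤ |2 * Real.cos (2 * π * r) - 2 * Real.cos (2 * π * r * (j:ℝ) / N)| ∧
      |2 * Real.cos (2 * π * r) - 2 * Real.cos (2 * π * r * (j:ℝ) / N)| < 1 := by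
    intro j hj1 hjB
    refine ⟨abs_nonneg _, ?_⟩
    have hj1' : (1:ℝ) ≤ j := by exact_mod_cast hj1
    have hjB' : (j:ℝ) < B := by exact_mod_cast hjB
    set a := 2 * π * r * (j:ℝ) / N with ha
    have ha0 : 0 < a := by
      apply div_pos _ hN'
      positivity
    have haB : a < 2 * π * (1 - r) := by
      rw [show 2 * π * (1 - r) = 2 * π * (r * B / N) by rw [hrB], ha]
      rw [div_lt_iff₀ hN']
      have : 2 * π * (r * ↑B / ↑N) * ↑N = 2 * π * r * (B:ℝ) := by field_simp
      rw [this]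
      have h2πr : 0 < 2 * π * r := by positivity
      exact mul_lt_mul_of_pos_left hjB' h2πr
    have hcos2 : cos (2 * π * (1 - r)) < cos a :=
      Real.cos_lt_cos_of_nonneg_of_le_pi ha0.le (by linarith) haB
    have hcosa1 : cos a ≤ 1 := Real.cos_le_one a
    rw [hcc2, abs_lt]
    constructor <;> linarith
  have hfk1 : ∀ k, 1 ≤ k → k < B → |f k| < 1 := by
    intro k hk1 hkB
    rw [hf, Finset.abs_prod]
    apply prod_lt_one_aux
    · intro j hj
      rw [Finset.mem_Icc] at hj
      exact hfac j hj.1 (lt_of_le_of_lt hj.2 hkB)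
    · exact ⟨1, Finset.mem_Icc.mpr ⟨le_refl 1, hk1⟩⟩
  have key : ∀ k, |f k| ≤ 1 := by
    intro k
    rcases Nat.eq_zero_or_pos k with hk0 | hk1
    · subst hk0
      rw [hf]
      simp
    · rcases lt_or_ge k B with hkB | hkB
      · exact (hfk1 k hk1 hkB).le
      · rw [part2 k hkB]; simp
  refine ⟨part1, part2, ?_⟩
  calc |∑ k ∈ Finset.range N, f k| ≤ ∑ k ∈ Finset.range N, |f k| :=
        Finset.abs_sum_le_sum_abs _ _
    _ < ∑ k ∈ Finset.range N, (1:ℝ) := by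
        apply Finset.sum_lt_sum (fun i _ => key i)
        refine ⟨B, Finset.mem_range.mpr hBN, ?_⟩
        rw [part2 B le_rfl]
        simp
    _ = N := by simp
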